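/- arXiv:1612.00001 — 2 statements merged into one kernel-verified Lean document; each statement's English description precedes it below -/
import Mathlib

section
/- Let M be a 3b×3b matrix over a field K partitioned into 3×3 blocks M_{ij} (1 ≤ i, j ≤ 3) of order b, with M₂₂ invertible. Define the Schur complements with respect to M₂₂: S_A = M₁₁ − M₁₂ M₂₂⁻¹ M₂₁, S_B = M₁₃ − M₁₂ M₂₂⁻¹ M₂₃, S_C = M₃₁ − M₃₂ M₂₂⁻¹ M₂₁, and S_D = M₃₃ − M₃₂ M₂₂⁻¹ M₂₃, and suppose S_D is invertible. Then the 2b×2b lower-right corner block P = [[M₂₂, M₂₃], [M₃₂, M₃₃]] of M is invertible, and the Schur complement of M with respect to P, namely M₁₁-row/column data [M₁₁] − [M₁₂ M₁₃] P⁻¹ [M₂₁; M₃₁], equals S_A − S_B S_D⁻¹ S_C. -/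
/-- Quotient property of Schur complements for a 3×3 block matrix:
the Schur complement of `M` with respect to the lower-right 2b×2b corner `P`
equals the nested Schur complement `S_A − S_B S_D⁻¹ S_C` of the one-block
Schur complements with respect to `M₂₂`. -/
theorem bri_nested_schur_3x3 {K : Type*} [Field K] {b : ℕ}
    (M11 M12 M13 M21 M22 M23 M31 M32 M33 : Matrix (Fin b) (Fin b) K)
    (hM22 : IsUnit M22)
    (SA SB SC SD : Matrix (Fin b) (Fin b) K)
    (hSA : SA = M11 - M12 * M22⁻¹ * M21)
    (hSB : SB = M13 - M12 * M22⁻¹ * M23)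
    (hSC : SC = M31 - M32 * M22⁻¹ * M21)
    (hSD : SD = M33 - M32 * M22⁻¹ * M23)
    (hSDunit : IsUnit SD) :
    IsUnit (Matrix.fromBlocks M22 M23 M32 M33) ∧
      M11 - Matrix.fromCols M12 M13 *
          (Matrix.fromBlocks M22 M23 M32 M33)⁻¹ * Matrix.fromRows M21 M31 =
        SA - SB * SD⁻¹ * SC := by
  letI := hM22.invertible
  have hinv22 : ⅟ M22 = M22⁻¹ := Matrix.invOf_eq_nonsing_inv M22
  have hSD' : SD = M33 - M32 * ⅟ M22 * M23 := by rw [hinv22]; exact hSD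
  letI : Invertible (M33 - M32 * ⅟ M22 * M23) := (hSD' ▸ hSDunit).invertible
  letI iP : Invertible (Matrix.fromBlocks M22 M23 M32 M33) :=
    Matrix.fromBlocks₁₁Invertible M22 M23 M32 M33
  letI : Invertible SD := hSDunit.invertible
  have hinvSD : ⅟ SD = SD⁻¹ := Matrix.invOf_eq_nonsing_inv SD
  have hSDeq : ⅟ (M33 - M32 * ⅟ M22 * M23) = SD⁻¹ := by
    rw [Matrix.invOf_eq_nonsing_inv, ← hSD']
  refine ⟨isUnit_of_invertible _, ?_⟩
  rw [← Matrix.invOf_eq_nonsing_inv, Matrix.invOf_fromBlocks₁₁_eq,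
    Matrix.fromCols_mul_fromBlocks, Matrix.fromCols_mul_fromRows,
    hSDeq, hinv22, hSA, hSB, hSC, hSD]
  noncomm_ring
end

section
/- Let M be an invertible 4b×4b matrix over a field K partitioned into 4×4 blocks M_{ij} (1 ≤ i, j ≤ 4) of order b, and write M⁻¹ = (N_{ij}) in the same partition. Suppose M₂₂ is invertible, and for i, j ∈ {1, 3, 4} define the first-level Schur complements S_{ij} = M_{ij} − M_{i2} M₂₂⁻¹ M_{2j}. Suppose S₃₃ is invertible, and for i, j ∈ {1, 4} define the second-level Schur complements T_{ij} = S_{ij} − S_{i3} S₃₃⁻¹ S₃ⱼ. Suppose T₄₄ is invertible. Then T₁₁ − T₁₄ T₄₄⁻¹ T₄₁ is invertible and N₁₁ = (T₁₁ − T₁₄ T₄₄⁻¹ T₄₁)⁻¹. -/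
open Matrix

/-- One step of block Schur-complement reduction: if `M` is invertible and, under a
splitting `e : p ⊕ q ≃ n`, its lower-right block `D` is invertible, then the Schur
complement `A - B D⁻¹ C` is invertible and the `p × p` corner of `M⁻¹` is its inverse. -/
lemma schur_step {K : Type*} [Field K] {n p q : Type*} [Fintype n] [Fintype p] [Fintype q]
    [DecidableEq n] [DecidableEq p] [DecidableEq q]
    (M : Matrix n n K) (e : p ⊕ q ≃ n) (hM : IsUnit M)
    (A : Matrix p p K) (B : Matrix p q K) (C : Matrix q p K) (D : Matrix q q K)
    (hA : ∀ i j, A i j = M (e (Sum.inl i)) (e (Sum.inl j)))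
    (hB : ∀ i j, B i j = M (e (Sum.inl i)) (e (Sum.inr j)))
    (hC : ∀ i j, C i j = M (e (Sum.inr i)) (e (Sum.inl j)))
    (hD : ∀ i j, D i j = M (e (Sum.inr i)) (e (Sum.inr j)))
    (hDu : IsUnit D) :
    IsUnit (A - B * D⁻¹ * C) ∧
      (Matrix.of fun i j => M⁻¹ (e (Sum.inl i)) (e (Sum.inl j))) = (A - B * D⁻¹ * C)⁻¹ := by
  have hsub : M.submatrix e e = fromBlocks A B C D := by
    ext i j
    cases i with
    | inl i => cases j with
      | inl j => simp [hA]
      | inr j => simp [hB]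
    | inr i => cases j with
      | inl j => simp [hC]
      | inr j => simp [hD]
  obtain ⟨iD⟩ := hDu.nonempty_invertible
  obtain ⟨iM⟩ := hM.nonempty_invertible
  letI iF : Invertible (fromBlocks A B C D) := by
    rw [← hsub]; exact M.submatrixEquivInvertible e e
  letI iS : Invertible (A - B * ⅟D * C) := invertibleOfFromBlocks₂₂Invertible A B C D
  have hDe : ⅟D = D⁻¹ := invOf_eq_nonsing_inv D
  have hSe : A - B * ⅟D * C = A - B * D⁻¹ * C := by rw [hDe]
  letI iS' : Invertible (A - B * D⁻¹ * C) := iS.copy _ hSe.symm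
  refine ⟨isUnit_of_invertible _, ?_⟩
  have hinv : (fromBlocks A B C D)⁻¹ =
      fromBlocks (⅟(A - B * ⅟D * C)) (-(⅟(A - B * ⅟D * C) * B * ⅟D))
        (-(⅟D * C * ⅟(A - B * ⅟D * C))) (⅟D + ⅟D * C * ⅟(A - B * ⅟D * C) * B * ⅟D) := by
    rw [← invOf_eq_nonsing_inv]
    exact invOf_fromBlocks₂₂_eq A B C D
  have hMinv : M⁻¹.submatrix e e = (fromBlocks A B C D)⁻¹ := by
    rw [← hsub, Matrix.inv_submatrix_equiv]
  have h2 : (A - B * D⁻¹ * C)⁻¹ = ⅟(A - B * ⅟D * C) := by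
    rw [← invOf_eq_nonsing_inv]
    try rfl
    try (congr 1; exact hSe.symm)
  have key : (Matrix.of fun i j => M⁻¹ (e (Sum.inl i)) (e (Sum.inl j)))
      = ((fromBlocks A B C D)⁻¹).toBlocks₁₁ := by
    ext i j
    exact congrFun (congrFun hMinv (Sum.inl i)) (Sum.inl j)
  rw [key, hinv, toBlocks_fromBlocks₁₁, h2]

/-- BRI for `k = 4`: the upper-left block `N₁₁` of the inverse of an invertible
4×4 block matrix is the inverse of the doubly-nested Schur complement
`T₁₁ − T₁₄ T₄₄⁻¹ T₄₁`. Blocks are 0-indexed: `Mb i j` is the paper's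
`M_{(i+1)(j+1)}`, so the paper's index sets `{1,3,4}` and `{1,4}` become
`{0,2,3}` (i.e. `≠ 1`) and `{0,3}`. -/
theorem bri_k4_topLeft_block {K : Type*} [Field K] {b : ℕ}
    (Mb : Fin 4 → Fin 4 → Matrix (Fin b) (Fin b) K)
    (M : Matrix (Fin 4 × Fin b) (Fin 4 × Fin b) K)
    (hblocks : ∀ (i j : Fin 4) (x y : Fin b), M (i, x) (j, y) = Mb i j x y)
    (hM : IsUnit M) (hM22 : IsUnit (Mb 1 1))
    (S : Fin 4 → Fin 4 → Matrix (Fin b) (Fin b) K)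
    (hS : ∀ i j : Fin 4, i ≠ 1 → j ≠ 1 →
      S i j = Mb i j - Mb i 1 * (Mb 1 1)⁻¹ * Mb 1 j)
    (hS33 : IsUnit (S 2 2))
    (T : Fin 4 → Fin 4 → Matrix (Fin b) (Fin b) K)
    (hT : ∀ i j : Fin 4, (i = 0 ∨ i = 3) → (j = 0 ∨ j = 3) →
      T i j = S i j - S i 2 * (S 2 2)⁻¹ * S 2 j)
    (hT44 : IsUnit (T 3 3)) :
    IsUnit (T 0 0 - T 0 3 * (T 3 3)⁻¹ * T 3 0) ∧
      (Matrix.of fun x y : Fin b => M⁻¹ ((0 : Fin 4), x) ((0 : Fin 4), y)) =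
        (T 0 0 - T 0 3 * (T 3 3)⁻¹ * T 3 0)⁻¹ := by
  classical
  set f1 : Fin 3 → Fin 4 := ![0, 2, 3] with hf1
  set g : Fin 2 → Fin 4 := ![0, 3] with hg
  -- equivalence splitting off block index 1 from Fin 4
  let e1 : (Fin 3 × Fin b) ⊕ Fin b ≃ Fin 4 × Fin b :=
    { toFun := fun z => Sum.elim (fun p => (f1 p.1, p.2)) (fun y => ((1 : Fin 4), y)) z
      invFun := fun p =>
        if p.1 = 0 then Sum.inl (0, p.2) else if p.1 = 1 then Sum.inr p.2
        else if p.1 = 2 then Sum.inl (1, p.2) else Sum.inl (2, p.2)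
      left_inv := by rintro (⟨i, x⟩ | y) <;> [skip; rfl] <;> fin_cases i <;> rfl
      right_inv := by rintro ⟨j, x⟩; fin_cases j <;> rfl }
  -- ### step 1: eliminate block index 1
  let A1 : Matrix (Fin 3 × Fin b) (Fin 3 × Fin b) K :=
    Matrix.of fun p q => Mb (f1 p.1) (f1 q.1) p.2 q.2
  let B1 : Matrix (Fin 3 × Fin b) (Fin b) K := Matrix.of fun p y => Mb (f1 p.1) 1 p.2 y
  let C1 : Matrix (Fin b) (Fin 3 × Fin b) K := Matrix.of fun x q => Mb 1 (f1 q.1) x q.2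
  have step1 := schur_step M e1 hM A1 B1 C1 (Mb 1 1)
    (fun i j => (hblocks _ _ _ _).symm) (fun i j => (hblocks _ _ _ _).symm)
    (fun i j => (hblocks _ _ _ _).symm) (fun i j => (hblocks _ _ _ _).symm) hM22
  have hf1ne : ∀ i : Fin 3, f1 i ≠ 1 := by decide
  let S1 : Matrix (Fin 3 × Fin b) (Fin 3 × Fin b) K :=
    Matrix.of fun p q => S (f1 p.1) (f1 q.1) p.2 q.2
  have hS1 : A1 - B1 * (Mb 1 1)⁻¹ * C1 = S1 := by
    ext ⟨i, x⟩ ⟨j, y⟩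
    show (A1 - B1 * (Mb 1 1)⁻¹ * C1) (i, x) (j, y) = S (f1 i) (f1 j) x y
    rw [hS _ _ (hf1ne i) (hf1ne j)]
    simp [A1, B1, C1, Matrix.mul_apply, Finset.sum_mul]
  rw [hS1] at step1
  -- ### step 2: eliminate block index 2 (now index 1 of Fin 3)
  let e2 : (Fin 2 × Fin b) ⊕ Fin b ≃ Fin 3 × Fin b :=
    { toFun := fun z => Sum.elim (fun p => ((![0, 2] : Fin 2 → Fin 3) p.1, p.2))
        (fun y => ((1 : Fin 3), y)) z
      invFun := fun p =>
        if p.1 = 0 then Sum.inl (0, p.2) else if p.1 = 1 then Sum.inr p.2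
        else Sum.inl (1, p.2)
      left_inv := by rintro (⟨i, x⟩ | y) <;> [skip; rfl] <;> fin_cases i <;> rfl
      right_inv := by rintro ⟨j, x⟩; fin_cases j <;> rfl }
  let A2 : Matrix (Fin 2 × Fin b) (Fin 2 × Fin b) K :=
    Matrix.of fun p q => S (g p.1) (g q.1) p.2 q.2
  let B2 : Matrix (Fin 2 × Fin b) (Fin b) K := Matrix.of fun p y => S (g p.1) 2 p.2 y
  let C2 : Matrix (Fin b) (Fin 2 × Fin b) K := Matrix.of fun x q => S 2 (g q.1) x q.2
  have hA2 : ∀ i j, A2 i j = S1 (e2 (Sum.inl i)) (e2 (Sum.inl j)) := by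
    rintro ⟨i, x⟩ ⟨j, y⟩; fin_cases i <;> fin_cases j <;> rfl
  have hB2 : ∀ i j, B2 i j = S1 (e2 (Sum.inl i)) (e2 (Sum.inr j)) := by
    rintro ⟨i, x⟩ j; fin_cases i <;> rfl
  have hC2 : ∀ i j, C2 i j = S1 (e2 (Sum.inr i)) (e2 (Sum.inl j)) := by
    rintro i ⟨j, y⟩; fin_cases j <;> rfl
  have hD2 : ∀ i j, S 2 2 i j = S1 (e2 (Sum.inr i)) (e2 (Sum.inr j)) := fun i j => rfl
  have step2 := schur_step S1 e2 step1.1 A2 B2 C2 (S 2 2) hA2 hB2 hC2 hD2 hS33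
  have hgmem : ∀ i : Fin 2, g i = 0 ∨ g i = 3 := by decide
  let T1 : Matrix (Fin 2 × Fin b) (Fin 2 × Fin b) K :=
    Matrix.of fun p q => T (g p.1) (g q.1) p.2 q.2
  have hT1 : A2 - B2 * (S 2 2)⁻¹ * C2 = T1 := by
    ext ⟨i, x⟩ ⟨j, y⟩
    show (A2 - B2 * (S 2 2)⁻¹ * C2) (i, x) (j, y) = T (g i) (g j) x y
    rw [hT _ _ (hgmem i) (hgmem j)]
    simp [A2, B2, C2, Matrix.mul_apply, Finset.sum_mul]
  rw [hT1] at step2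
  -- ### step 3: eliminate block index 3 (now index 1 of Fin 2)
  let e3 : Fin b ⊕ Fin b ≃ Fin 2 × Fin b :=
    { toFun := fun z => Sum.elim (fun x => ((0 : Fin 2), x)) (fun y => ((1 : Fin 2), y)) z
      invFun := fun p => if p.1 = 0 then Sum.inl p.2 else Sum.inr p.2
      left_inv := by rintro (x | y) <;> rfl
      right_inv := by rintro ⟨j, x⟩; fin_cases j <;> rfl }
  have step3 := schur_step T1 e3 step2.1 (T 0 0) (T 0 3) (T 3 0) (T 3 3)
    (fun i j => rfl) (fun i j => rfl) (fun i j => rfl) (fun i j => rfl) hT44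
  refine ⟨step3.1, ?_⟩
  -- chain the three corner identifications
  have h1 : ∀ x y : Fin b, M⁻¹ ((0 : Fin 4), x) ((0 : Fin 4), y) = S1⁻¹ (0, x) (0, y) :=
    fun x y => congrFun (congrFun step1.2 ((0 : Fin 3), x)) ((0 : Fin 3), y)
  have h2 : ∀ x y : Fin b, S1⁻¹ ((0 : Fin 3), x) ((0 : Fin 3), y) = T1⁻¹ (0, x) (0, y) :=
    fun x y => congrFun (congrFun step2.2 ((0 : Fin 2), x)) ((0 : Fin 2), y)
  ext x y
  show M⁻¹ ((0 : Fin 4), x) ((0 : Fin 4), y) = _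
  rw [h1 x y, h2 x y]
  exact congrFun (congrFun step3.2 x) y
end
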